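/- Let μ ∈ ℝ, λ ∈ ℤ, and let Φ(z,X) ∈ 𝓕[[X]] be a formal power series with holomorphic coefficients. Then for every γ ∈ SL(2,ℝ) and all z ∈ ℍ, one has (𝔏_μ(Φ) |^J_{λ+2} γ)(z,X) = 𝔏_μ(Φ |^J_λ γ)(z,X) + (λ − μ) 𝔎(γ,z) (Φ |^J_λ γ)(z,X). -/

import Mathlib

noncomputable section

open Complex Polynomial

/-- The upper half plane `ℍ`, as a subset of `ℂ`. -/
def UHP : Set ℂ := {z : ℂ | 0 < z.im}

/-- `SL(2, ℝ)`. -/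
abbrev SL2R := Matrix.SpecialLinearGroup (Fin 2) ℝ

/-- `GL⁺(2, ℝ)`, the group of real 2×2 matrices of positive determinant. -/
abbrev GL2P := Matrix.GLPos (Fin 2) ℝ

/-- Topology on `SL(2,ℝ)` induced from the space of matrices (used to speak of
discrete subgroups of `SL(2,ℝ)`). -/
instance : TopologicalSpace SL2R :=
  TopologicalSpace.induced (fun g : SL2R => (g : Matrix (Fin 2) (Fin 2) ℝ)) inferInstance

/-- A function belongs to `𝓕` if it is holomorphic on the upper half plane. -/
def Hol (f : ℂ → ℂ) : Prop := DifferentiableOn ℂ f UHP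

/-- `𝔍(γ, z) = cz + d` for `γ ∈ SL(2, ℝ)`. -/
def jJ (γ : SL2R) (z : ℂ) : ℂ := (γ 1 0 : ℝ) * z + (γ 1 1 : ℝ)

/-- `𝔎(γ, z) = c/(cz + d)` for `γ ∈ SL(2, ℝ)`. -/
def kK (γ : SL2R) (z : ℂ) : ℂ := (γ 1 0 : ℝ) / jJ γ z

/-- `γ z = (az+b)/(cz+d)` for `γ ∈ SL(2, ℝ)`. -/
def mact (γ : SL2R) (z : ℂ) : ℂ := ((γ 0 0 : ℝ) * z + (γ 0 1 : ℝ)) / jJ γ z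

/-- The underlying real matrix of an element of `GL⁺(2, ℝ)`. -/
def gmat (α : GL2P) : Matrix (Fin 2) (Fin 2) ℝ :=
  ((α : Matrix.GeneralLinearGroup (Fin 2) ℝ) : Matrix (Fin 2) (Fin 2) ℝ)

/-- The determinant of an element of `GL⁺(2, ℝ)`. -/
def gdet (α : GL2P) : ℝ := (gmat α).det

/-- `𝔍(α, z) = cz + d` for `α ∈ GL⁺(2, ℝ)`. -/
def gJ (α : GL2P) (z : ℂ) : ℂ := (gmat α 1 0 : ℝ) * z + (gmat α 1 1 : ℝ)

/-- `𝔎(α, z) = c/(cz + d)` for `α ∈ GL⁺(2, ℝ)`. -/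
def gK (α : GL2P) (z : ℂ) : ℂ := (gmat α 1 0 : ℝ) / gJ α z

/-- `α z = (az+b)/(cz+d)` for `α ∈ GL⁺(2, ℝ)`. -/
def gact (α : GL2P) (z : ℂ) : ℂ := ((gmat α 0 0 : ℝ) * z + (gmat α 0 1 : ℝ)) / gJ α z

/-- `(det α)^(μ/2)` for `α ∈ GL⁺(2, ℝ)` and `μ ∈ ℤ`. -/
def detpow (α : GL2P) (μ : ℤ) : ℂ := ((gdet α ^ ((μ : ℝ) / 2) : ℝ) : ℂ)

/-- The weight-`ξ` action `F ∥_ξ γ` of `SL(2,ℝ)` on polynomials over `𝓕`: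
`(F ∥_ξ γ)(z, X) = 𝔍(γ,z)^(-ξ) F(γz, 𝔍(γ,z)^2 (X - 𝔎(γ,z)))`. -/
def polyAct (ξ : ℤ) (F : ℂ → Polynomial ℂ) (γ : SL2R) : ℂ → Polynomial ℂ := fun z =>
  Polynomial.C (jJ γ z ^ (-ξ)) *
    (F (mact γ z)).comp (Polynomial.C (jJ γ z ^ 2) * (Polynomial.X - Polynomial.C (kK γ z)))

/-- The weight-`ξ` action `F ∥_ξ α` of `GL⁺(2,ℝ)` on polynomials over `𝓕`:
`(F ∥_ξ α)(z, X) = (det α)^(ξ/2) 𝔍(α,z)^(-ξ) F(αz, (det α)⁻¹ 𝔍(α,z)^2 (X - 𝔎(α,z)))`. -/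
def polyActG (ξ : ℤ) (F : ℂ → Polynomial ℂ) (α : GL2P) : ℂ → Polynomial ℂ := fun z =>
  Polynomial.C (detpow α ξ * gJ α z ^ (-ξ)) *
    (F (gact α z)).comp
      (Polynomial.C ((gdet α : ℂ)⁻¹ * gJ α z ^ 2) * (Polynomial.X - Polynomial.C (gK α z)))

/-- The weight-`l` action `Φ |^J_l γ` of `SL(2,ℝ)` on formal power series over `𝓕`:
`(Φ |^J_l γ)(z, X) = 𝔍(γ,z)^(-l) e^(-𝔎(γ,z) X) Φ(γz, 𝔍(γ,z)^(-2) X)`. -/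
def psAct (l : ℤ) (Φ : ℂ → PowerSeries ℂ) (γ : SL2R) : ℂ → PowerSeries ℂ := fun z =>
  PowerSeries.C (jJ γ z ^ (-l)) *
    (PowerSeries.mk fun n => (-(kK γ z)) ^ n / (n.factorial : ℂ)) *
    PowerSeries.rescale (jJ γ z ^ (-2 : ℤ)) (Φ (mact γ z))

/-- The weight-`l` action `Φ |^J_l α` of `GL⁺(2,ℝ)` on formal power series over `𝓕`:
`(Φ |^J_l α)(z, X) = (det α)^(l/2) 𝔍(α,z)^(-l) e^(-𝔎(α,z) X) Φ(αz, (det α) 𝔍(α,z)^(-2) X)`. -/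
def psActG (l : ℤ) (Φ : ℂ → PowerSeries ℂ) (α : GL2P) : ℂ → PowerSeries ℂ := fun z =>
  PowerSeries.C (detpow α l * gJ α z ^ (-l)) *
    (PowerSeries.mk fun n => (-(gK α z)) ^ n / (n.factorial : ℂ)) *
    PowerSeries.rescale ((gdet α : ℂ) * gJ α z ^ (-2 : ℤ)) (Φ (gact α z))

/-- The map `Π^δ_m`: for `Φ(z,X) = Σ_k φ_k(z) X^(k+δ)`,
`(Π^δ_m Φ)(z, X) = Σ_{r=0}^m (1/r!) φ_(m-r)(z) X^r`. -/
def PiDM (δ m : ℕ) (Φ : ℂ → PowerSeries ℂ) : ℂ → Polynomial ℂ := fun z =>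
  ∑ r ∈ Finset.range (m + 1),
    Polynomial.C ((PowerSeries.coeff (m - r + δ) (Φ z)) / (r.factorial : ℂ)) *
      Polynomial.X ^ r

/-- Membership in `𝓕_m[X]`: degree at most `m` and holomorphic coefficients. -/
def InFmX (m : ℕ) (F : ℂ → Polynomial ℂ) : Prop :=
  (∀ z : ℂ, (F z).degree ≤ (m : WithBot ℕ)) ∧ ∀ r : ℕ, Hol fun z => (F z).coeff r

/-- Membership in `𝓕[[X]]_δ = X^δ 𝓕[[X]]` with holomorphic coefficients. -/
def InFXd (δ : ℕ) (Φ : ℂ → PowerSeries ℂ) : Prop :=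
  (∀ z : ℂ, ∀ k < δ, PowerSeries.coeff k (Φ z) = 0) ∧
    ∀ k : ℕ, Hol fun z => PowerSeries.coeff k (Φ z)

/-- `QP^m_ξ(Γ)`: quasimodular polynomials of weight `ξ` and degree at most `m` for `Γ`. -/
def IsQP (Γ : Subgroup SL2R) (ξ : ℤ) (m : ℕ) (F : ℂ → Polynomial ℂ) : Prop :=
  InFmX m F ∧ ∀ γ ∈ Γ, ∀ z ∈ UHP, polyAct ξ F γ z = F z

/-- `J_l(Γ)_δ`: Jacobi-like forms of weight `l` for `Γ` lying in `𝓕[[X]]_δ`. -/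
def IsJF (Γ : Subgroup SL2R) (l : ℤ) (δ : ℕ) (Φ : ℂ → PowerSeries ℂ) : Prop :=
  InFXd δ Φ ∧ ∀ γ ∈ Γ, ∀ z ∈ UHP, psAct l Φ γ z = Φ z

/-- `M_μ(Γ)`: modular forms of weight `μ` for `Γ` (cusp conditions suppressed). -/
def IsModular (Γ : Subgroup SL2R) (μ : ℤ) (f : ℂ → ℂ) : Prop :=
  Hol f ∧ ∀ γ ∈ Γ, ∀ z ∈ UHP, jJ γ z ^ (-μ) * f (mact γ z) = f z

/-- `QM^m_ξ(Γ)`: quasimodular forms of weight `ξ` and depth at most `m` for `Γ`. -/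
def IsQM (Γ : Subgroup SL2R) (ξ : ℤ) (m : ℕ) (f : ℂ → ℂ) : Prop :=
  Hol f ∧ ∃ g : ℕ → ℂ → ℂ, (∀ r, Hol (g r)) ∧
    ∀ γ ∈ Γ, ∀ z ∈ UHP,
      jJ γ z ^ (-ξ) * f (mact γ z) = ∑ r ∈ Finset.range (m + 1), g r z * kK γ z ^ r

/-- The factorial `t!` of an integer `t` (equal to `(t.toNat)!`; intended for `t ≥ 0`). -/
def zfact (t : ℤ) : ℂ := (t.toNat.factorial : ℂ)


open Finset in
lemma mainalg (J K : ℂ) (hJ : J ≠ 0) (l : ℤ) (μc : ℂ) (n : ℕ) (A dA : ℕ → ℂ) :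
    ∑ k ∈ range (n+1),
      J ^ (-(l+2) - 2*((n-k : ℕ):ℤ)) * ((-K)^k / (k.factorial:ℂ)) *
        (dA (n-k) - (((n-k:ℕ):ℂ)+1) * (μc + ((n-k:ℕ):ℂ)) * A (n-k+1))
    = (∑ k ∈ range (n+1),
        (((((-l - 2*((n-k:ℕ):ℤ)) : ℤ) : ℂ) - (k:ℂ)) * K *
            (J ^ (-l - 2*((n-k:ℕ):ℤ)) * ((-K)^k / (k.factorial:ℂ)) * A (n-k))
          + J ^ (-l - 2*((n-k:ℕ):ℤ)) * ((-K)^k / (k.factorial:ℂ)) * (J ^ (-2:ℤ) * dA (n-k))))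
      - ((n:ℂ)+1) * (μc + (n:ℂ)) * ∑ k ∈ range (n+1+1),
          J ^ (-l - 2*((n+1-k:ℕ):ℤ)) * ((-K)^k / (k.factorial:ℂ)) * A (n+1-k)
      + ((l:ℂ) - μc) * K * ∑ k ∈ range (n+1),
          J ^ (-l - 2*((n-k:ℕ):ℤ)) * ((-K)^k / (k.factorial:ℂ)) * A (n-k) := by
  set T' : ℕ → ℂ := fun p =>
    J ^ (-l - 2*((n+1-p:ℕ):ℤ)) * ((-K)^p / (p.factorial:ℂ)) * A (n+1-p) with hT'
  set V1 : ℕ → ℂ := fun p => -((((n:ℂ)-p+1) * (μc + (n:ℂ) - p))) * T' p with hV1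
  set G : ℕ → ℂ := fun p => -((μc + 2*(n:ℂ) + 1 - p) * (p:ℂ)) * T' p with hG
  have step : ∀ k ∈ range (n+1),
      J ^ (-(l+2) - 2*((n-k : ℕ):ℤ)) * ((-K)^k / (k.factorial:ℂ)) *
          (dA (n-k) - (((n-k:ℕ):ℂ)+1) * (μc + ((n-k:ℕ):ℂ)) * A (n-k+1))
        - (((((-l - 2*((n-k:ℕ):ℤ)) : ℤ) : ℂ) - (k:ℂ)) * K *
            (J ^ (-l - 2*((n-k:ℕ):ℤ)) * ((-K)^k / (k.factorial:ℂ)) * A (n-k))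
          + J ^ (-l - 2*((n-k:ℕ):ℤ)) * ((-K)^k / (k.factorial:ℂ)) * (J ^ (-2:ℤ) * dA (n-k)))
        - ((l:ℂ) - μc) * K *
            (J ^ (-l - 2*((n-k:ℕ):ℤ)) * ((-K)^k / (k.factorial:ℂ)) * A (n-k))
      = V1 k + G (k+1) := by
    intro k hk
    have hkn : k ≤ n := by simpa [Nat.lt_succ_iff] using hk
    have h1 : n - k + 1 = n + 1 - k := by omega
    have h2 : n + 1 - (k+1) = n - k := by omega
    have e1 : (-(l+2) - 2*((n-k:ℕ):ℤ)) = (-l - 2*((n-k:ℕ):ℤ)) + (-2) := by ring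
    have e2 : (-l - 2*((n+1-k:ℕ):ℤ)) = (-l - 2*((n-k:ℕ):ℤ)) + (-2) := by omega
    have hfk : ((k.factorial:ℂ)) ≠ 0 := Nat.cast_ne_zero.2 k.factorial_ne_zero
    have hk1 : ((k:ℂ)+1) ≠ 0 := Nat.cast_add_one_ne_zero k
    simp only [hV1, hG, hT', h1, h2, e1, e2, zpow_add₀ hJ]
    push_cast [Nat.cast_sub hkn, Nat.factorial_succ]
    field_simp
    ring
  have H : ∑ k ∈ range (n+1),
      (J ^ (-(l+2) - 2*((n-k : ℕ):ℤ)) * ((-K)^k / (k.factorial:ℂ)) *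
          (dA (n-k) - (((n-k:ℕ):ℂ)+1) * (μc + ((n-k:ℕ):ℂ)) * A (n-k+1))
        - (((((-l - 2*((n-k:ℕ):ℤ)) : ℤ) : ℂ) - (k:ℂ)) * K *
            (J ^ (-l - 2*((n-k:ℕ):ℤ)) * ((-K)^k / (k.factorial:ℂ)) * A (n-k))
          + J ^ (-l - 2*((n-k:ℕ):ℤ)) * ((-K)^k / (k.factorial:ℂ)) * (J ^ (-2:ℤ) * dA (n-k)))
        - ((l:ℂ) - μc) * K *
            (J ^ (-l - 2*((n-k:ℕ):ℤ)) * ((-K)^k / (k.factorial:ℂ)) * A (n-k)))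
      = ∑ k ∈ range (n+1), (V1 k + G (k+1)) := Finset.sum_congr rfl step
  rw [Finset.sum_sub_distrib, Finset.sum_sub_distrib, ← Finset.mul_sum] at H
  have hsplit : ∑ k ∈ range (n+1), (V1 k + G (k+1))
      = ∑ k ∈ range (n+1), V1 k + ∑ k ∈ range (n+1), G (k+1) := Finset.sum_add_distrib
  have hV1top : V1 (n+1) = 0 := by
    simp only [hV1]; push_cast; ring
  have hG0 : G 0 = 0 := by simp only [hG]; push_cast; ring
  have hVext : ∑ k ∈ range (n+1), V1 k = ∑ k ∈ range (n+1+1), V1 k := by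
    rw [Finset.sum_range_succ V1 (n+1), hV1top, add_zero]
  have hGshift : ∑ k ∈ range (n+1), G (k+1) = ∑ k ∈ range (n+1+1), G k := by
    rw [Finset.sum_range_succ' G (n+1), hG0, add_zero]
  have hfinal : ∑ p ∈ range (n+1+1), (V1 p + G p)
      = -(((n:ℂ)+1) * (μc + (n:ℂ))) * ∑ p ∈ range (n+1+1), T' p := by
    rw [Finset.mul_sum]
    refine Finset.sum_congr rfl fun p hp => ?_
    simp only [hV1, hG]
    ring
  have hcomb : ∑ k ∈ range (n+1), (V1 k + G (k+1))
      = -(((n:ℂ)+1) * (μc + (n:ℂ))) * ∑ p ∈ range (n+1+1), T' p := by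
    rw [hsplit, hVext, hGshift, ← Finset.sum_add_distrib, hfinal]
  rw [hcomb] at H
  linear_combination H

lemma UHP_open : IsOpen UHP := isOpen_lt continuous_const Complex.continuous_im

lemma det_rel' (γ : SL2R) : (γ 0 0 : ℝ) * (γ 1 1 : ℝ) - (γ 0 1 : ℝ) * (γ 1 0 : ℝ) = 1 := by
  have h := γ.2
  rw [Matrix.det_fin_two] at h
  exact h

lemma jJ_ne (γ : SL2R) {z : ℂ} (hz : z ∈ UHP) : jJ γ z ≠ 0 := by
  have hz' : 0 < z.im := hz
  intro h
  have him : (jJ γ z).im = 0 := by rw [h]; simp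
  have hre : (jJ γ z).re = 0 := by rw [h]; simp
  simp [jJ, Complex.add_im, Complex.mul_im, Complex.add_re, Complex.mul_re] at him hre
  rcases eq_or_ne ((γ 1 0 : ℝ)) 0 with hc | hc
  · have hd : (γ 1 1 : ℝ) ≠ 0 := by
      intro hd
      have h2 := det_rel' γ
      rw [hc, hd] at h2; simp at h2
    rw [hc] at hre; simp at hre; exact hd hre
  · have : z.im = 0 := by
      rcases him with h1 | h1
      · exact absurd h1 hc
      · exact h1
    linarith

lemma mact_mem (γ : SL2R) {z : ℂ} (hz : z ∈ UHP) : mact γ z ∈ UHP := by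
  have hJ : jJ γ z ≠ 0 := jJ_ne γ hz
  have hz' : 0 < z.im := hz
  have hN : 0 < Complex.normSq (jJ γ z) := Complex.normSq_pos.2 hJ
  show 0 < (mact γ z).im
  rw [mact, Complex.div_im]
  have hdet := det_rel' γ
  have h1 : ((γ 0 0 : ℝ) * z + (γ 0 1 : ℝ) : ℂ).im = (γ 0 0 : ℝ) * z.im := by
    simp [Complex.add_im, Complex.mul_im]
  have h2 : ((γ 0 0 : ℝ) * z + (γ 0 1 : ℝ) : ℂ).re = (γ 0 0 : ℝ) * z.re + (γ 0 1 : ℝ) := by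
    simp [Complex.add_re, Complex.mul_re]
  have h3 : (jJ γ z).im = (γ 1 0 : ℝ) * z.im := by
    simp [jJ, Complex.add_im, Complex.mul_im]
  have h4 : (jJ γ z).re = (γ 1 0 : ℝ) * z.re + (γ 1 1 : ℝ) := by
    simp [jJ, Complex.add_re, Complex.mul_re]
  rw [h1, h2, h3, h4]
  have key : (γ 0 0:ℝ) * z.im * ((γ 1 0:ℝ) * z.re + (γ 1 1:ℝ)) / Complex.normSq (jJ γ z) -
      ((γ 0 0:ℝ) * z.re + (γ 0 1:ℝ)) * ((γ 1 0:ℝ) * z.im) / Complex.normSq (jJ γ z)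
      = z.im / Complex.normSq (jJ γ z) := by
    field_simp
    nlinarith [hdet]
  rw [key]
  positivity

lemma hasDerivAt_jJ (γ : SL2R) (z : ℂ) : HasDerivAt (jJ γ) ((γ 1 0 : ℝ) : ℂ) z := by
  exact (((hasDerivAt_id z).const_mul ((γ 1 0 : ℝ):ℂ)).add_const ((γ 1 1 : ℝ):ℂ)).congr_deriv (by simp)

lemma det_relC (γ : SL2R) :
    ((γ 0 0 : ℝ):ℂ) * ((γ 1 1 : ℝ):ℂ) - ((γ 0 1 : ℝ):ℂ) * ((γ 1 0 : ℝ):ℂ) = 1 := by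
  exact_mod_cast congrArg (fun x : ℝ => (x : ℂ)) (det_rel' γ)

lemma hasDerivAt_mact (γ : SL2R) {z : ℂ} (hz : z ∈ UHP) :
    HasDerivAt (mact γ) (jJ γ z ^ (-2 : ℤ)) z := by
  have hJ := jJ_ne γ hz
  have hnum : HasDerivAt (fun w => ((γ 0 0 : ℝ):ℂ) * w + ((γ 0 1 : ℝ):ℂ)) ((γ 0 0 : ℝ):ℂ) z := by
    simpa using ((hasDerivAt_id z).const_mul ((γ 0 0 : ℝ):ℂ)).add_const ((γ 0 1 : ℝ):ℂ)
  have h := hnum.div (hasDerivAt_jJ γ z) hJ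
  refine h.congr_deriv ?_
  have hnum2 : ((γ 0 0 : ℝ):ℂ) * jJ γ z - (((γ 0 0 : ℝ):ℂ) * z + ((γ 0 1 : ℝ):ℂ)) * ((γ 1 0 : ℝ):ℂ) = 1 := by
    have := det_relC γ
    simp only [jJ]; ring_nf; linear_combination this
  rw [hnum2, zpow_neg, zpow_two]
  field_simp

lemma hasDerivAt_kK (γ : SL2R) {z : ℂ} (hz : z ∈ UHP) :
    HasDerivAt (kK γ) (-(kK γ z) ^ 2) z := by
  have hJ := jJ_ne γ hz
  have h := (hasDerivAt_const z ((γ 1 0 : ℝ):ℂ)).div (hasDerivAt_jJ γ z) hJ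
  refine h.congr_deriv ?_
  rw [kK]
  field_simp
  ring

lemma coeff_psAct (l : ℤ) (Φ : ℂ → PowerSeries ℂ) (γ : SL2R) {z : ℂ} (hJ : jJ γ z ≠ 0) (n : ℕ) :
    PowerSeries.coeff n (psAct l Φ γ z) =
      ∑ k ∈ Finset.range (n + 1),
        jJ γ z ^ (-l - 2 * ((n - k : ℕ) : ℤ)) * ((-(kK γ z)) ^ k / (k.factorial : ℂ)) *
          PowerSeries.coeff (n - k) (Φ (mact γ z)) := by
  rw [psAct, mul_assoc, PowerSeries.coeff_C_mul, PowerSeries.coeff_mul,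
    Finset.Nat.sum_antidiagonal_eq_sum_range_succ_mk, Finset.mul_sum]
  refine Finset.sum_congr rfl fun k hk => ?_
  rw [PowerSeries.coeff_mk, PowerSeries.coeff_rescale]
  rw [← zpow_natCast (jJ γ z ^ (-2:ℤ)) (n - k), ← zpow_mul]
  rw [show -l - 2 * ((n - k : ℕ) : ℤ) = -l + (-2 * ((n-k:ℕ):ℤ)) by ring, zpow_add₀ hJ]
  ring

lemma term_hasDerivAt (γ : SL2R) {z : ℂ} (hz : z ∈ UHP) (e : ℤ) (k : ℕ) (a : ℂ → ℂ)
    (ha : Hol a) :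
    HasDerivAt
      (fun w => jJ γ w ^ e * ((-(kK γ w)) ^ k / (k.factorial : ℂ)) * a (mact γ w))
      (((e : ℂ) - (k : ℂ)) * kK γ z *
          (jJ γ z ^ e * ((-(kK γ z)) ^ k / (k.factorial : ℂ)) * a (mact γ z)) +
        jJ γ z ^ e * ((-(kK γ z)) ^ k / (k.factorial : ℂ)) *
          (jJ γ z ^ (-2 : ℤ) * deriv a (mact γ z))) z := by
  have hJ := jJ_ne γ hz
  have hJpow : HasDerivAt (fun w => jJ γ w ^ e) ((e : ℂ) * jJ γ z ^ (e - 1) * ((γ 1 0 : ℝ) : ℂ)) z :=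
    (hasDerivAt_zpow e (jJ γ z) (Or.inl hJ)).comp z (hasDerivAt_jJ γ z)
  have hE : HasDerivAt (fun w => (-(kK γ w)) ^ k / (k.factorial : ℂ))
      (((k : ℂ) * (-(kK γ z)) ^ (k - 1) * (-(-(kK γ z) ^ 2))) / (k.factorial : ℂ)) z :=
    (((hasDerivAt_kK γ hz).neg).pow k).div_const _
  have hA : HasDerivAt (fun w => a (mact γ w)) (deriv a (mact γ z) * jJ γ z ^ (-2 : ℤ)) z :=
    ((ha.differentiableAt (UHP_open.mem_nhds (mact_mem γ hz))).hasDerivAt).comp z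
      (hasDerivAt_mact γ hz)
  have total := (hJpow.mul hE).mul hA
  refine total.congr_deriv ?_
  simp only [Pi.mul_apply]
  have he1 : jJ γ z ^ (e - 1) = jJ γ z ^ e * (jJ γ z)⁻¹ := by
    rw [zpow_sub_one₀ hJ]
  have h2 : jJ γ z ^ (-2 : ℤ) = ((jJ γ z)⁻¹) ^ 2 := by
    rw [zpow_neg, inv_pow]; norm_cast
  have hK : kK γ z = ((γ 1 0 : ℝ) : ℂ) * (jJ γ z)⁻¹ := by rw [kK, div_eq_mul_inv]
  rw [he1, h2, hK]
  rcases k with _ | k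
  · simp only [Nat.cast_zero, pow_zero, Nat.factorial_zero, Nat.cast_one, div_one, zero_mul,
      mul_one, sub_zero, CharP.cast_eq_zero]
    ring
  · rw [Nat.succ_sub_one, pow_succ]
    ring


-- STATEMENT 17 def
/-- The radial heat operator `𝔏_μ = ∂/∂z - μ ∂/∂X - X ∂²/∂X²` on `𝓕[[X]]`. -/
def heat (μ : ℝ) (Φ : ℂ → PowerSeries ℂ) : ℂ → PowerSeries ℂ := fun z =>
  PowerSeries.mk fun n =>
    deriv (fun w => PowerSeries.coeff n (Φ w)) z -
      ((n : ℂ) + 1) * ((μ : ℂ) + (n : ℂ)) * PowerSeries.coeff (n + 1) (Φ z)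

-- STATEMENT 17
theorem stmt17 (μ : ℝ) (l : ℤ) (Φ : ℂ → PowerSeries ℂ)
    (hΦ : ∀ k : ℕ, Hol fun z => PowerSeries.coeff k (Φ z)) (γ : SL2R) :
    ∀ z ∈ UHP,
      psAct (l + 2) (heat μ Φ) γ z =
        heat μ (psAct l Φ γ) z + PowerSeries.C (((l : ℂ) - (μ : ℂ)) * kK γ z) *
          psAct l Φ γ z := by
  intro z hz
  have hJ : jJ γ z ≠ 0 := jJ_ne γ hz
  refine PowerSeries.ext fun n => ?_
  have hs : HasDerivAt (fun w => PowerSeries.coeff n (psAct l Φ γ w))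
      (∑ k ∈ Finset.range (n+1),
        (((((-l - 2*((n-k:ℕ):ℤ)) : ℤ) : ℂ) - (k:ℂ)) * kK γ z *
            (jJ γ z ^ (-l - 2*((n-k:ℕ):ℤ)) * ((-(kK γ z))^k / (k.factorial:ℂ)) *
              PowerSeries.coeff (n-k) (Φ (mact γ z)))
          + jJ γ z ^ (-l - 2*((n-k:ℕ):ℤ)) * ((-(kK γ z))^k / (k.factorial:ℂ)) *
            (jJ γ z ^ (-2:ℤ) *
              deriv (fun w => PowerSeries.coeff (n-k) (Φ w)) (mact γ z)))) z := by
    have hsum : HasDerivAt (fun w => ∑ k ∈ Finset.range (n+1),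
        jJ γ w ^ (-l - 2*((n-k:ℕ):ℤ)) * ((-(kK γ w))^k / (k.factorial:ℂ)) *
          PowerSeries.coeff (n-k) (Φ (mact γ w)))
        (∑ k ∈ Finset.range (n+1),
          (((((-l - 2*((n-k:ℕ):ℤ)) : ℤ) : ℂ) - (k:ℂ)) * kK γ z *
              (jJ γ z ^ (-l - 2*((n-k:ℕ):ℤ)) * ((-(kK γ z))^k / (k.factorial:ℂ)) *
                PowerSeries.coeff (n-k) (Φ (mact γ z)))
            + jJ γ z ^ (-l - 2*((n-k:ℕ):ℤ)) * ((-(kK γ z))^k / (k.factorial:ℂ)) *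
              (jJ γ z ^ (-2:ℤ) *
                deriv (fun w => PowerSeries.coeff (n-k) (Φ w)) (mact γ z)))) z := by
      refine HasDerivAt.fun_sum fun k hk => ?_
      exact term_hasDerivAt γ hz (-l - 2*((n-k:ℕ):ℤ)) k
        (fun w => PowerSeries.coeff (n-k) (Φ w)) (hΦ (n-k))
    refine hsum.congr_of_eventuallyEq ?_
    filter_upwards [UHP_open.mem_nhds hz] with w hw
    exact coeff_psAct l Φ γ (jJ_ne γ hw) n
  rw [map_add, PowerSeries.coeff_C_mul]
  rw [coeff_psAct (l+2) (heat μ Φ) γ hJ n, coeff_psAct l Φ γ hJ n]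
  simp only [heat, PowerSeries.coeff_mk]
  rw [hs.deriv]
  rw [coeff_psAct l Φ γ hJ (n+1)]
  have := mainalg (jJ γ z) (kK γ z) hJ l ((μ:ℝ):ℂ) n
    (fun j => PowerSeries.coeff j (Φ (mact γ z)))
    (fun j => deriv (fun w => PowerSeries.coeff j (Φ w)) (mact γ z))
  linear_combination this
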